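/- Let (X,r) be a multipermutation solution with |X| > 1 satisfying condition (*): for every x ∈ X there exist y, y' ∈ X with σ_y(x) = x and τ_{y'}(x) = x. Then mpl(X,r) = mpl'(X,r) + 1. -/
import Mathlib


/-- A non-degenerate set-theoretic solution of the Yang–Baxter equation:
`r(x,y) = (σ x y, τ y x)` with all `σ x`, `τ x` bijective, `r` bijective,
and `r` satisfying the braid relation `r₁ r₂ r₁ = r₂ r₁ r₂`. -/
structure NDSolution (X : Type*) where
  σ : X → X → X
  τ : X → X → X
  σ_bij : ∀ x, Function.Bijective (σ x)
  τ_bij : ∀ x, Function.Bijective (τ x)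
  r_bij : Function.Bijective (fun p : X × X => (σ p.1 p.2, τ p.2 p.1))
  braid : ∀ x y z : X,
    (let r1 : X × X × X → X × X × X := fun t => (σ t.1 t.2.1, τ t.2.1 t.1, t.2.2)
     let r2 : X × X × X → X × X × X := fun t => (t.1, σ t.2.1 t.2.2, τ t.2.2 t.2.1)
     r1 (r2 (r1 (x, y, z))) = r2 (r1 (r2 (x, y, z))))

/-- The equivalence relation on `X` identifying points that become equal in the
`n`-th retraction `Ret^n(X,r)`; `retRel S 1` is `σ_x = σ_y ∧ τ_x = τ_y`. -/
def retRel {X : Type*} (S : NDSolution X) : ℕ → X → X → Prop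
  | 0, x, y => x = y
  | n + 1, x, y =>
      (∀ z, retRel S n (S.σ x z) (S.σ y z)) ∧ (∀ z, retRel S n (S.τ x z) (S.τ y z))

/-- `Ret^n(X,r)` has exactly one element. -/
def retIsSingleton {X : Type*} (S : NDSolution X) (n : ℕ) : Prop :=
  ∀ x y, retRel S n x y

/-- `Ret^n(X,r)` is a trivial solution, i.e. on `Ret^n(X,r)` one has
`r(x,y) = (y,x)`. -/
def retIsTrivial {X : Type*} (S : NDSolution X) (n : ℕ) : Prop :=
  ∀ x y, retRel S n (S.σ x y) y ∧ retRel S n (S.τ x y) y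

/-- For a multipermutation solution with more than one element satisfying
condition (*) — every `x` is fixed by some `σ_y` and some `τ_{y'}` — one has
`mpl(X,r) = mpl'(X,r) + 1`. -/
theorem retRel_symm' {X : Type*} (S : NDSolution X) :
    ∀ n (x y : X), retRel S n x y → retRel S n y x
  | 0, _, _, h => h.symm
  | n + 1, _, _, h =>
    ⟨fun z => retRel_symm' S n _ _ (h.1 z), fun z => retRel_symm' S n _ _ (h.2 z)⟩

theorem retRel_trans' {X : Type*} (S : NDSolution X) :
    ∀ n (x y z : X), retRel S n x y → retRel S n y z → retRel S n x z
  | 0, _, _, _, h, h' => h.trans h'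
  | n + 1, _, _, _, h, h' =>
    ⟨fun z => retRel_trans' S n _ _ _ (h.1 z) (h'.1 z),
     fun z => retRel_trans' S n _ _ _ (h.2 z) (h'.2 z)⟩

theorem stmt_6 {X : Type*} [Nontrivial X] (S : NDSolution X)
    (hstar : ∀ x : X, (∃ y, S.σ y x = x) ∧ (∃ y', S.τ y' x = x))
    (h : ∃ n, retIsSingleton S n) :
    ∃ m' : ℕ, IsLeast {n | retIsTrivial S n} m' ∧
      IsLeast {n | retIsSingleton S n} (m' + 1) := by
  classical
  have key : ∀ n, retIsTrivial S n ↔ retIsSingleton S (n + 1) := by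
    intro n
    constructor
    · intro ht x y
      exact ⟨fun z => retRel_trans' S n _ _ _ (ht x z).1 (retRel_symm' S n _ _ (ht y z).1),
             fun z => retRel_trans' S n _ _ _ (ht x z).2 (retRel_symm' S n _ _ (ht y z).2)⟩
    · intro hs x y
      obtain ⟨⟨w, hw⟩, ⟨w', hw'⟩⟩ := hstar y
      constructor
      · have := (hs x w).1 y; rwa [hw] at this
      · have := (hs x w').2 y; rwa [hw'] at this
  have hm : retIsSingleton S (Nat.find h) := Nat.find_spec h
  have hmin : ∀ k, k < Nat.find h → ¬ retIsSingleton S k := fun k hk => Nat.find_min h hk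
  have hm0 : Nat.find h ≠ 0 := by
    intro h0
    obtain ⟨a, b, hab⟩ := exists_pair_ne X
    have := hm a b
    rw [h0] at this
    exact hab this
  obtain ⟨m', hm'⟩ := Nat.exists_eq_succ_of_ne_zero hm0
  rw [hm'] at hm hmin
  refine ⟨m', ⟨(key m').2 hm, ?_⟩, hm, ?_⟩
  · intro k hk
    by_contra hlt
    push_neg at hlt
    exact hmin (k + 1) (by omega) ((key k).1 hk)
  · intro k hk
    by_contra hlt
    push_neg at hlt
    exact hmin k (by omega) hk
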